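/- Monotonicity of softmax in temperature at the maximizer: for α : Fin n → ℝ with strict maximizer m* and 0 < t₁ < t₂, the softmax value at the maximizer satisfies h(m*; t₁) > h(m*; t₂), where h(m; t) = exp(α m / t)/Σ_p exp(α p / t), provided n ≥ 2 and not all α values equal α m*. -/

import Mathlib

open Real

theorem softmax_max_antitone_in_temperature (n : ℕ) (hn : 2 ≤ n) (α : Fin n → ℝ)
    (mstar : Fin n) (hmax : ∀ m : Fin n, m ≠ mstar → α m < α mstar)
    (hne : ∃ m : Fin n, α m ≠ α mstar)
    (t₁ t₂ : ℝ) (ht₁ : 0 < t₁) (ht : t₁ < t₂) :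
    Real.exp (α mstar / t₂) / (∑ p : Fin n, Real.exp (α p / t₂)) <
      Real.exp (α mstar / t₁) / (∑ p : Fin n, Real.exp (α p / t₁)) := by
  have ht₂ : (0:ℝ) < t₂ := ht₁.trans ht
  -- rewrite sums
  have key : ∀ t : ℝ, 0 < t →
      (∑ p : Fin n, Real.exp (α p / t))
        = Real.exp (α mstar / t) * ∑ p : Fin n, Real.exp ((α p - α mstar) / t) := by
    intro t htt
    rw [Finset.mul_sum]
    congr 1; ext p
    rw [← Real.exp_add]
    congr 1
    field_simp
    ring
  have hS : ∀ t : ℝ, 0 < t → 0 < ∑ p : Fin n, Real.exp ((α p - α mstar) / t) := by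
    intro t htt
    exact Finset.sum_pos (fun p _ => Real.exp_pos _) ⟨mstar, Finset.mem_univ _⟩
  rw [key t₁ ht₁, key t₂ ht₂]
  rw [div_mul_cancel_left₀ (Real.exp_ne_zero _), div_mul_cancel_left₀ (Real.exp_ne_zero _)]
  have hsum : (∑ p : Fin n, Real.exp ((α p - α mstar) / t₁))
      < ∑ p : Fin n, Real.exp ((α p - α mstar) / t₂) := by
    obtain ⟨m, hm⟩ := hne
    have hmne : m ≠ mstar := fun h => hm (by rw [h])
    have hneg : α m - α mstar < 0 := sub_neg.mpr (hmax m hmne)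
    refine Finset.sum_lt_sum (f := fun p => Real.exp ((α p - α mstar) / t₁)) ?_ ⟨m, Finset.mem_univ m, ?_⟩
    · intro p _
      have hle : α p - α mstar ≤ 0 := by
        rcases eq_or_ne p mstar with h | h
        · simp [h]
        · exact le_of_lt (sub_neg.mpr (hmax p h))
      apply Real.exp_le_exp.mpr
      rw [div_le_div_iff₀ ht₁ ht₂]
      nlinarith
    · apply Real.exp_lt_exp.mpr
      rw [div_lt_div_iff₀ ht₁ ht₂]
      nlinarith
  exact (inv_strictAnti₀ (hS t₁ ht₁) hsum)
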